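/- arXiv:0806.0880 — 3 statements merged into one kernel-verified Lean document; each statement's English description precedes it below -/
import Mathlib

section
/- Let (ℓₙ) be a sequence of positive reals with ℓₙ ≤ 1 and let (Xₙ) be a sequence of independent random points uniformly distributed on the circle 𝕋 = ℝ/ℤ. If ∑ₙ ℓₙ = ∞, then almost surely the Lebesgue measure of E_ℓ = limsupₙ A(Xₙ, ℓₙ) equals 1. -/
open MeasureTheory ProbabilityTheory Filter Set

/-- The circle `𝕋 = ℝ/ℤ`. -/
abbrev Circle1 := AddCircle (1:ℝ)

/-- The open arc of center `x` and length `l`. -/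
def arc (x : Circle1) (l : ℝ) : Set Circle1 := Metric.ball x (l/2)

/-- The limsup set `⋂_N ⋃_{n ≥ N} A(xₙ, ℓₙ)`. -/
def limsupArcs (x : ℕ → Circle1) (ℓ : ℕ → ℝ) : Set Circle1 :=
  ⋂ N, ⋃ n, ⋃ (_ : n ≥ N), arc (x n) (ℓ n)

lemma mem_limsupArcs_iff {x : ℕ → Circle1} {ℓ : ℕ → ℝ} {y : Circle1} :
    y ∈ limsupArcs x ℓ ↔ ∀ N, ∃ n ≥ N, dist y (x n) < ℓ n / 2 := by
  simp [limsupArcs, arc, Metric.mem_ball]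

lemma volume_ball_circle (y : Circle1) (r : ℝ) :
    volume (Metric.ball y r) = ENNReal.ofReal (min 1 (2 * r)) := by
  rw [← measure_congr (AddCircle.closedBall_ae_eq_ball), AddCircle.volume_closedBall]

lemma measurable_limsupArcs_set {Ω : Type*} [MeasurableSpace Ω] (X : ℕ → Ω → Circle1)
    (hmeas : ∀ n, Measurable (X n)) (ℓ : ℕ → ℝ) :
    MeasurableSet {p : Ω × Circle1 | p.2 ∈ limsupArcs (fun n => X n p.1) ℓ} := by
  have : {p : Ω × Circle1 | p.2 ∈ limsupArcs (fun n => X n p.1) ℓ}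
      = ⋂ N, ⋃ n, ⋃ (_ : n ≥ N), {p : Ω × Circle1 | dist p.2 (X n p.1) < ℓ n / 2} := by
    ext p; simp [mem_limsupArcs_iff]
  rw [this]
  refine MeasurableSet.iInter fun N => MeasurableSet.iUnion fun n =>
    MeasurableSet.iUnion fun _ => ?_
  exact measurableSet_lt (measurable_snd.dist ((hmeas n).comp measurable_fst)) measurable_const

/-- If `ℓₙ ≤ 1` and `∑ ℓₙ = ⊤`, then a.s. the Lebesgue measure of `E_ℓ` equals `1`. -/
theorem stmt1 {Ω : Type*} [MeasurableSpace Ω] (μ : Measure Ω) [IsProbabilityMeasure μ]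
    (X : ℕ → Ω → Circle1) (hmeas : ∀ n, Measurable (X n))
    (hindep : iIndepFun X μ)
    (hunif : ∀ n, Measure.map (X n) μ = (volume : Measure Circle1))
    (ℓ : ℕ → ℝ) (hpos : ∀ n, 0 < ℓ n) (hle : ∀ n, ℓ n ≤ 1) (hdiv : ¬ Summable ℓ) :
    ∀ᵐ ω ∂μ, volume (limsupArcs (fun n => X n ω) ℓ) = 1 := by
  -- Step 1: for every fixed y, a.e. ω has y in the limsup set (second Borel–Cantelli).
  have h1 : ∀ y : Circle1, ∀ᵐ ω ∂μ, y ∈ limsupArcs (fun n => X n ω) ℓ := by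
    intro y
    set s : ℕ → Set Ω := fun n => X n ⁻¹' (Metric.ball y (ℓ n / 2)) with hs_def
    have hsm : ∀ n, MeasurableSet (s n) := fun n => (hmeas n) measurableSet_ball
    have hsind : iIndepSet s μ := by
      rw [iIndepSet_iff_meas_biInter hsm]
      intro t
      exact hindep.meas_biInter fun i _ => ⟨Metric.ball y (ℓ i / 2),
        measurableSet_ball, rfl⟩
    have hmu : ∀ n, μ (s n) = ENNReal.ofReal (ℓ n) := by
      intro n
      rw [hs_def]
      rw [← Measure.map_apply (hmeas n) measurableSet_ball, hunif n,
        volume_ball_circle]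
      congr 1
      rw [mul_div_cancel₀ _ (two_ne_zero)]
      exact min_eq_right (hle n)
    have htop : (∑' n, μ (s n)) = ⊤ := by
      by_contra h
      apply hdiv
      have hsum := ENNReal.summable_toReal h
      have : ∀ n, (μ (s n)).toReal = ℓ n := fun n => by
        rw [hmu n, ENNReal.toReal_ofReal (hpos n).le]
      simpa [this] using hsum
    have hlim := measure_limsup_eq_one hsm hsind htop
    have hmemiff : ∀ ω, ω ∈ limsup s atTop ↔ y ∈ limsupArcs (fun n => X n ω) ℓ := by
      intro ω
      rw [mem_limsup_iff_frequently_mem, frequently_atTop, mem_limsupArcs_iff]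
      constructor
      · intro h N
        obtain ⟨n, hn, hmem⟩ := h N
        exact ⟨n, hn, by rw [dist_comm]; exact hmem⟩
      · intro h N
        obtain ⟨n, hn, hd⟩ := h N
        exact ⟨n, hn, by rw [hs_def]; simpa [Metric.mem_ball, dist_comm] using hd⟩
    have hcompl : μ (limsup s atTop)ᶜ = 0 := by
      have hms : MeasurableSet (limsup s atTop) := by
        rw [limsup_eq_iInf_iSup_of_nat]
        exact MeasurableSet.iInter fun N => MeasurableSet.iUnion fun n =>
          MeasurableSet.iUnion fun _ => hsm n
      rw [measure_compl hms (measure_ne_top _ _), hlim, measure_univ, tsub_self]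
    filter_upwards [measure_eq_zero_iff_ae_notMem.1 hcompl] with ω hω
    exact (hmemiff ω).1 (not_not.1 hω)
  -- Step 2: Fubini.
  set S : Set (Ω × Circle1) := {p | p.2 ∈ limsupArcs (fun n => X n p.1) ℓ}ᶜ with hS_def
  have hSmeas : MeasurableSet S := (measurable_limsupArcs_set X hmeas ℓ).compl
  have hSnull : (μ.prod volume) S = 0 := by
    have hswap : (μ.prod volume) S = (volume.prod μ) (Prod.swap ⁻¹' S) := by
      conv_lhs => rw [← Measure.prod_swap (μ := volume) (ν := μ)]
      rw [Measure.map_apply measurable_swap hSmeas]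
    rw [hswap, Measure.prod_apply (hSmeas.preimage measurable_swap)]
    have hz : ∀ y : Circle1, μ (Prod.mk y ⁻¹' (Prod.swap ⁻¹' S)) = 0 := by
      intro y
      have hset : (Prod.mk y ⁻¹' (Prod.swap ⁻¹' S))
          = {ω | ¬ y ∈ limsupArcs (fun n => X n ω) ℓ} := by
        ext ω; simp [hS_def]
      rw [hset]
      exact ae_iff.1 (h1 y)
    simp [hz]
  have h2 := Measure.measure_ae_null_of_prod_null hSnull
  filter_upwards [h2] with ω hω
  simp only [Pi.zero_apply] at hω
  have hpre : Prod.mk ω ⁻¹' S = (limsupArcs (fun n => X n ω) ℓ)ᶜ := by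
    ext y; simp [hS_def]
  rw [hpre] at hω
  have hEmeas : MeasurableSet (limsupArcs (fun n => X n ω) ℓ) := by
    refine MeasurableSet.iInter fun N => MeasurableSet.iUnion fun n =>
      MeasurableSet.iUnion fun _ => ?_
    exact measurableSet_ball
  have := measure_add_measure_compl hEmeas (μ := (volume : Measure Circle1))
  rw [hω, add_zero, AddCircle.measure_univ, ENNReal.ofReal_one] at this
  exact this
end

section
/- Let (ℓₙ) be a nonincreasing sequence of positive reals converging to 0, and suppose that the random limsup set E_{(1/n)} = limsupₙ A(Xₙ, 1/n) has full Lebesgue measure in 𝕋 (which holds almost surely). Then the set E_ℓ = limsupₙ A(Xₙ, ℓₙ) is nonempty. -/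
open MeasureTheory ProbabilityTheory Filter Set

/-- If `⋃_{n ≥ N} A(Xₙ, 1/n)` has full measure for every `N` and `ℓₙ ≤ 1/n`
eventually, then `E_ℓ = limsupₙ A(Xₙ, ℓₙ)` is nonempty. -/
theorem stmt9 (ℓ : ℕ → ℝ) (hpos : ∀ n, 0 < ℓ n) (hmono : Antitone ℓ)
    (hlim : Tendsto ℓ atTop (nhds 0)) (X : ℕ → Circle1)
    (hfull : ∀ N : ℕ, volume (⋃ n, ⋃ (_ : n ≥ N), arc (X n) (1 / (n:ℝ))) = 1)
    (hsmall : ∃ N₀ : ℕ, 1 ≤ N₀ ∧ ∀ n ≥ N₀, ℓ n ≤ 1 / (n:ℝ)) :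
    (limsupArcs X ℓ).Nonempty := by
  obtain ⟨N₀, hN₀1, hN₀⟩ := hsmall
  -- step lemma
  have step : ∀ m : ℕ, ∃ n, m < n ∧
      Metric.closedBall (X n) (ℓ n / 4) ⊆ Metric.closedBall (X m) (ℓ m / 4) ∧
      Metric.closedBall (X n) (ℓ n / 4) ⊆ arc (X n) (ℓ n) := by
    intro m
    set r : ℝ := ℓ m / 4 with hr
    have hrpos : 0 < r := by rw [hr]; have := hpos m; linarith
    obtain ⟨K₁, hK₁⟩ := exists_nat_gt (2 / r)
    set K : ℕ := max (max (m + 1) N₀) K₁ + 1 with hK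
    have hKpos : 0 < K := Nat.succ_pos _
    have hKK₁ : K₁ < K := lt_of_le_of_lt (le_max_right _ _) (Nat.lt_succ_self _)
    have hKinv : 1 / (K:ℝ) < r / 2 := by
      rw [div_lt_div_iff₀ (by exact_mod_cast hKpos) two_pos]
      have h2r : 2 / r < (K:ℝ) := lt_of_lt_of_le hK₁ (by exact_mod_cast hKK₁.le)
      rw [div_lt_iff₀ hrpos] at h2r
      linarith
    -- the full-measure set intersects the ball of radius r/2 around X m
    set U : Set Circle1 := ⋃ n, ⋃ (_ : n ≥ K), arc (X n) (1 / (n:ℝ)) with hU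
    have hUopen : IsOpen U := by
      apply isOpen_iUnion; intro n; apply isOpen_iUnion; intro _
      exact Metric.isOpen_ball
    have hUfull : volume U = 1 := hfull K
    set V : Set Circle1 := Metric.ball (X m) (r / 2) with hV
    have hVU : (V ∩ U).Nonempty := by
      by_contra h
      rw [Set.not_nonempty_iff_eq_empty, ← Set.disjoint_iff_inter_eq_empty] at h
      have hsub : V ⊆ Uᶜ := h.subset_compl_right
      have hUc : volume Uᶜ = 0 := by
        have huniv : volume (Set.univ : Set Circle1) = 1 := by
          rw [AddCircle.measure_univ]; simp
        rw [measure_compl hUopen.measurableSet (by rw [hUfull]; exact ENNReal.one_ne_top),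
          huniv, hUfull, tsub_self]
      have := measure_mono_null hsub hUc
      exact (Metric.measure_ball_pos volume (X m) (by positivity)).ne' this
    obtain ⟨z, hzV, hzU⟩ := hVU
    simp only [hU, Set.mem_iUnion] at hzU
    obtain ⟨n, hnK, hzn⟩ := hzU
    have hnpos : 0 < n := lt_of_lt_of_le hKpos hnK
    have hnN₀ : N₀ ≤ n := le_trans (le_trans (le_max_right _ _) (le_max_left _ _))
      (le_trans (Nat.le_succ _) hnK)
    have hℓn : ℓ n ≤ 1 / (n:ℝ) := hN₀ n hnN₀
    have hninv : 1 / (n:ℝ) ≤ 1 / (K:ℝ) := by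
      apply one_div_le_one_div_of_le (by exact_mod_cast hKpos) (by exact_mod_cast hnK)
    have hmn : m < n := lt_of_lt_of_le (lt_of_le_of_lt
      (le_trans (Nat.le_succ m) (le_trans (le_max_left _ _) (le_max_left _ _)))
      (Nat.lt_succ_self _)) hnK
    refine ⟨n, hmn, ?_, ?_⟩
    · intro w hw
      rw [Metric.mem_closedBall] at hw ⊢
      have h1 : dist (X n) z < 1 / (n:ℝ) / 2 := by
        have := hzn
        rw [arc, Metric.mem_ball, dist_comm] at this
        exact this
      have h2 : dist z (X m) < r / 2 / 2 * 2 := by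
        rw [hV, Metric.mem_ball] at hzV; linarith
      have h3 : dist w (X m) ≤ dist w (X n) + dist (X n) z + dist z (X m) :=
        dist_triangle4 w (X n) z (X m)
      have h4 : ℓ n / 4 ≤ 1 / (n:ℝ) / 4 := by linarith
      have hninvpos : (0:ℝ) < 1 / (n:ℝ) := by positivity
      calc dist w (X m) ≤ ℓ n / 4 + dist (X n) z + dist z (X m) := by linarith
        _ ≤ 1 / (n:ℝ) / 4 + 1 / (n:ℝ) / 2 + r / 2 := by linarith
        _ ≤ 1 / (K:ℝ) + r / 2 := by linarith
        _ ≤ r := by linarith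
    · intro w hw
      rw [Metric.mem_closedBall] at hw
      rw [arc, Metric.mem_ball]
      have := hpos n
      linarith
  -- build the nested sequence
  choose f hf1 hf2 hf3 using step
  set a : ℕ → ℕ := fun k => f^[k + 1] 0 with ha
  have haSucc : ∀ k, a (k + 1) = f (a k) := by
    intro k
    simp only [ha, Function.iterate_succ_apply']
  have hamono : StrictMono a := strictMono_nat_of_lt_succ (fun k => by
    rw [haSucc]; exact hf1 (a k))
  have ha0 : a 0 = f 0 := rfl
  set S : ℕ → Set Circle1 := fun k => Metric.closedBall (X (a k)) (ℓ (a k) / 4) with hS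
  have hnested : ∀ k, S (k + 1) ⊆ S k := by
    intro k
    simp only [hS, haSucc]
    exact hf2 (a k)
  have hne : ∀ k, (S k).Nonempty := fun k =>
    ⟨X (a k), Metric.mem_closedBall_self (by have := hpos (a k); linarith)⟩
  have hcl : ∀ k, IsClosed (S k) := fun k => Metric.isClosed_closedBall
  have hcompact : IsCompact (S 0) := (hcl 0).isCompact
  obtain ⟨x, hx⟩ := IsCompact.nonempty_iInter_of_sequence_nonempty_isCompact_isClosed
    S hnested hne hcompact hcl
  refine ⟨x, ?_⟩
  rw [limsupArcs, Set.mem_iInter]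
  intro N
  rw [Set.mem_iUnion]
  refine ⟨a N, ?_⟩
  rw [Set.mem_iUnion]
  refine ⟨hamono.le_apply, ?_⟩
  have hxS : x ∈ S N := Set.mem_iInter.mp hx N
  have harcsub : S N ⊆ arc (X (a N)) (ℓ (a N)) := by
    rcases N with _ | k
    · simpa [hS, ha0] using hf3 0
    · simp only [hS, haSucc]; exact hf3 (a k)
  exact harcsub hxS
end

section
/- Let (ℓₙ) be a sequence of positive reals converging to 0 and suppose ∑ₙ g(ℓₙ) < ∞ for a gauge function g. Then there exists a gauge function ḡ with ḡ(r)/g(r) → ∞ monotonically as r → 0⁺ and such that ∑ₙ ḡ(ℓₙ) < ∞. -/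
open MeasureTheory ProbabilityTheory Filter Set

/-- A gauge function: nondecreasing near `0`, vanishing and continuous at `0⁺`,
with `r ↦ g r / r` nonincreasing and positive near `0`. -/
structure IsGauge (g : ℝ → ℝ) : Prop where
  zero : g 0 = 0
  tendsto_zero : Filter.Tendsto g (nhdsWithin 0 (Set.Ioi 0)) (nhds 0)
  mono : ∃ ε > 0, MonotoneOn g (Set.Icc 0 ε)
  ratio_antitone : ∃ ε > 0, AntitoneOn (fun r => g r / r) (Set.Ioc 0 ε)
  ratio_pos : ∃ ε > 0, ∀ r ∈ Set.Ioc 0 ε, 0 < g r / r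

/-- The Hausdorff `g`-measure on the circle. -/
noncomputable def hausdorffG (g : ℝ → ℝ) : Measure Circle1 :=
  MeasureTheory.Measure.mkMetric (fun r => ENNReal.ofReal (g r.toReal))

/-- Auxiliary: for a summable nonnegative sequence `u`, the truncated sums
`∑ min (u n) c` can be made arbitrarily small by choosing `c` small. -/
lemma aux_exists_trunc (u : ℕ → ℝ) (hu : Summable u) (hu0 : ∀ n, 0 ≤ u n)
    (δ : ℝ) (hδ : 0 < δ) : ∃ c : ℝ, 0 < c ∧ c ≤ δ ∧ (∑' n, min (u n) c) ≤ δ := by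
  obtain ⟨N, hN⟩ := ((tendsto_sum_nat_add u).eventually
    (gt_mem_nhds (by positivity : (0:ℝ) < δ / 2))).exists
  set c : ℝ := min δ (δ / 2 / (N + 1)) with hc
  have hc0 : 0 < c := by positivity
  refine ⟨c, hc0, min_le_left _ _, ?_⟩
  have hsmin : Summable fun n => min (u n) c :=
    hu.of_nonneg_of_le (fun n => le_min (hu0 n) hc0.le) (fun n => min_le_left _ _)
  rw [← Summable.sum_add_tsum_nat_add N hsmin]
  have hNle : (N : ℝ) / (N + 1) ≤ 1 := by
    rw [div_le_one (by positivity)]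
    linarith [(Nat.cast_nonneg N : (0:ℝ) ≤ N)]
  have h1 : ∑ n ∈ Finset.range N, min (u n) c ≤ δ / 2 := by
    calc ∑ n ∈ Finset.range N, min (u n) c
        ≤ ∑ _n ∈ Finset.range N, (δ / 2 / (N + 1)) :=
          Finset.sum_le_sum fun n _ => le_trans (min_le_right _ _) (min_le_right _ _)
      _ = (δ / 2) * ((N : ℝ) / (N + 1)) := by
          rw [Finset.sum_const, Finset.card_range]; push_cast; ring
      _ ≤ (δ / 2) * 1 := mul_le_mul_of_nonneg_left hNle (by positivity)
      _ = δ / 2 := mul_one _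
  have h2 : (∑' k, min (u (k + N)) c) ≤ δ / 2 := by
    calc (∑' k, min (u (k + N)) c) ≤ ∑' k, u (k + N) :=
        Summable.tsum_le_tsum (fun k => min_le_left _ _)
          ((summable_nat_add_iff N).2 hsmin) ((summable_nat_add_iff N).2 hu)
      _ ≤ δ / 2 := hN.le
  linarith

set_option maxHeartbeats 1000000 in
/-- If `∑ g(ℓₙ) < ∞`, there is a gauge `ḡ ≻ g` (the ratio `ḡ/g` tends monotonically
to `∞` at `0⁺`) with `∑ ḡ(ℓₙ) < ∞`. -/
theorem stmt14 (g : ℝ → ℝ) (hg : IsGauge g) (ℓ : ℕ → ℝ) (hpos : ∀ n, 0 < ℓ n)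
    (hlim : Tendsto ℓ atTop (nhds 0)) (hsum : Summable (fun n => g (ℓ n))) :
    ∃ gbar : ℝ → ℝ, IsGauge gbar ∧
      (∃ ε > (0:ℝ), AntitoneOn (fun r => gbar r / g r) (Set.Ioc 0 ε)) ∧
      Tendsto (fun r => gbar r / g r) (nhdsWithin 0 (Set.Ioi 0)) atTop ∧
      Summable (fun n => gbar (ℓ n)) := by
  classical
  obtain ⟨ε₁, hε₁, hmono⟩ := hg.mono
  obtain ⟨ε₂, hε₂, hanti⟩ := hg.ratio_antitone
  obtain ⟨ε₃, hε₃, hrpos⟩ := hg.ratio_pos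
  set ε₀ : ℝ := min ε₁ (min ε₂ ε₃) with hε₀def
  have hε₀ : 0 < ε₀ := lt_min hε₁ (lt_min hε₂ hε₃)
  have hε₀1 : ε₀ ≤ ε₁ := min_le_left _ _
  have hε₀2 : ε₀ ≤ ε₂ := le_trans (min_le_right _ _) (min_le_left _ _)
  have hε₀3 : ε₀ ≤ ε₃ := le_trans (min_le_right _ _) (min_le_right _ _)
  have hgpos : ∀ r ∈ Set.Ioc 0 ε₀, 0 < g r := by
    intro r hr
    have h1 := hrpos r ⟨hr.1, le_trans hr.2 hε₀3⟩
    have h2 := mul_pos h1 hr.1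
    rwa [div_mul_cancel₀ _ (ne_of_gt hr.1)] at h2
  have hganti : AntitoneOn (fun r => g r / r) (Set.Ioc 0 ε₀) :=
    hanti.mono (Set.Ioc_subset_Ioc_right hε₀2)
  have hgmono : MonotoneOn g (Set.Icc 0 ε₀) := hmono.mono (Set.Icc_subset_Icc_right hε₀1)
  -- the truncated version of `g`, globally monotone and nonnegative
  set g0 : ℝ → ℝ := fun r => g (min (max r 0) ε₀) with hg0def
  have hmem : ∀ r : ℝ, min (max r 0) ε₀ ∈ Set.Icc 0 ε₀ := fun r =>
    ⟨le_min (le_max_right _ _) hε₀.le, min_le_right _ _⟩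
  have hg0eq : ∀ r ∈ Set.Icc 0 ε₀, g0 r = g r := by
    intro r hr
    simp only [hg0def]
    rw [max_eq_left hr.1, min_eq_left hr.2]
  have hg00 : g0 0 = 0 := by rw [hg0eq 0 ⟨le_rfl, hε₀.le⟩, hg.zero]
  have hg0nonneg : ∀ r, 0 ≤ g0 r := by
    intro r
    have := hgmono ⟨le_rfl, hε₀.le⟩ (hmem r) (hmem r).1
    rwa [hg.zero] at this
  have hg0mono : Monotone g0 := fun r s hrs =>
    hgmono (hmem r) (hmem s) (min_le_min (max_le_max hrs le_rfl) le_rfl)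
  -- summability of `g0 ∘ ℓ`
  obtain ⟨N₀, hN₀⟩ : ∃ N₀, ∀ n ≥ N₀, ℓ n ≤ ε₀ := by
    rcases eventually_atTop.1 (hlim.eventually (gt_mem_nhds hε₀)) with ⟨N₀, h⟩
    exact ⟨N₀, fun n hn => (h n hn).le⟩
  have hsum0 : Summable fun n => g0 (ℓ n) := by
    rw [← summable_nat_add_iff N₀]
    have heq : (fun n => g0 (ℓ (n + N₀))) = fun n => g (ℓ (n + N₀)) := by
      funext n
      exact hg0eq _ ⟨(hpos _).le, hN₀ _ (Nat.le_add_left _ _)⟩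
    rw [heq]
    exact (summable_nat_add_iff N₀).2 hsum
  -- choose the truncation levels
  have hchoice : ∀ k : ℕ, ∃ cc : ℝ, 0 < cc ∧ cc ≤ (16:ℝ)⁻¹ ^ k ∧
      (∑' n, min (g0 (ℓ n)) cc) ≤ (4:ℝ)⁻¹ ^ k := by
    intro k
    obtain ⟨cc, h1, h2, h3⟩ := aux_exists_trunc _ hsum0 (fun n => hg0nonneg _)
      (min ((16:ℝ)⁻¹ ^ k) ((4:ℝ)⁻¹ ^ k)) (lt_min (by positivity) (by positivity))
    exact ⟨cc, h1, h2.trans (min_le_left _ _), h3.trans (min_le_right _ _)⟩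
  choose c hcpos hcle hcsum using hchoice
  -- the new gauge
  set gbar : ℝ → ℝ := fun r => ∑' k, (2:ℝ) ^ k * min (g0 r) (c k) with hgbardef
  have hterm_nonneg : ∀ r, ∀ k : ℕ, 0 ≤ (2:ℝ) ^ k * min (g0 r) (c k) := fun r k =>
    mul_nonneg (by positivity) (le_min (hg0nonneg r) (hcpos k).le)
  have hterm_le : ∀ r, ∀ k : ℕ, (2:ℝ) ^ k * min (g0 r) (c k) ≤ (8:ℝ)⁻¹ ^ k := by
    intro r k
    calc (2:ℝ)^k * min (g0 r) (c k) ≤ (2:ℝ)^k * ((16:ℝ)⁻¹ ^ k) :=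
        mul_le_mul_of_nonneg_left ((min_le_right _ _).trans (hcle k)) (by positivity)
      _ = ((2:ℝ) * (16:ℝ)⁻¹) ^ k := (mul_pow _ _ _).symm
      _ = (8:ℝ)⁻¹ ^ k := by norm_num
  have hsummk : ∀ r, Summable fun k => (2:ℝ) ^ k * min (g0 r) (c k) := fun r =>
    (summable_geometric_of_lt_one (by norm_num) (by norm_num : (8:ℝ)⁻¹ < 1)).of_nonneg_of_le
      (hterm_nonneg r) (hterm_le r)
  have hgbar_nonneg : ∀ r, 0 ≤ gbar r := fun r => tsum_nonneg (hterm_nonneg r)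
  have hgbarmono : Monotone gbar := fun r s hrs =>
    Summable.tsum_le_tsum (fun k => mul_le_mul_of_nonneg_left
      (min_le_min (hg0mono hrs) le_rfl) (by positivity)) (hsummk r) (hsummk s)
  have hgbar0 : gbar 0 = 0 := by
    have hz : ∀ k : ℕ, (2:ℝ)^k * min (g0 0) (c k) = 0 := by
      intro k
      rw [hg00, min_eq_left (hcpos k).le, mul_zero]
    calc gbar 0 = ∑' k : ℕ, (0:ℝ) := tsum_congr hz
      _ = 0 := tsum_zero
  -- the √ bound, for continuity at 0⁺
  have hsqrt_bound : ∀ r, gbar r ≤ 4 * Real.sqrt (g0 r) := by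
    intro r
    have h1 : ∀ k : ℕ, (2:ℝ)^k * min (g0 r) (c k) ≤ Real.sqrt (g0 r) * (2:ℝ)⁻¹ ^ k := by
      intro k
      have hmin : min (g0 r) (c k) ≤ Real.sqrt (g0 r) * Real.sqrt (c k) := by
        rw [← Real.sqrt_mul (hg0nonneg r)]
        apply Real.le_sqrt_of_sq_le
        have hm1 : min (g0 r) (c k) ≤ g0 r := min_le_left _ _
        have hm2 : min (g0 r) (c k) ≤ c k := min_le_right _ _
        have hm0 : 0 ≤ min (g0 r) (c k) := le_min (hg0nonneg r) (hcpos k).le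
        nlinarith
      have hsc : Real.sqrt (c k) ≤ (4:ℝ)⁻¹ ^ k := by
        have h16 : ((16:ℝ)⁻¹) ^ k = ((4:ℝ)⁻¹ ^ k) ^ 2 := by
          rw [← pow_mul, pow_mul']
          norm_num
        calc Real.sqrt (c k) ≤ Real.sqrt ((16:ℝ)⁻¹ ^ k) := Real.sqrt_le_sqrt (hcle k)
          _ = (4:ℝ)⁻¹ ^ k := by rw [h16, Real.sqrt_sq (by positivity)]
      calc (2:ℝ)^k * min (g0 r) (c k)
          ≤ (2:ℝ)^k * (Real.sqrt (g0 r) * Real.sqrt (c k)) :=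
            mul_le_mul_of_nonneg_left hmin (by positivity)
        _ ≤ (2:ℝ)^k * (Real.sqrt (g0 r) * (4:ℝ)⁻¹ ^ k) :=
            mul_le_mul_of_nonneg_left
              (mul_le_mul_of_nonneg_left hsc (Real.sqrt_nonneg _)) (by positivity)
        _ = Real.sqrt (g0 r) * ((2 * (4:ℝ)⁻¹) ^ k) := by rw [mul_pow]; ring
        _ = Real.sqrt (g0 r) * (2:ℝ)⁻¹ ^ k := by norm_num
    calc gbar r ≤ ∑' k : ℕ, Real.sqrt (g0 r) * (2:ℝ)⁻¹ ^ k :=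
        Summable.tsum_le_tsum h1 (hsummk r)
          ((summable_geometric_of_lt_one (by norm_num) (by norm_num)).mul_left _)
      _ = Real.sqrt (g0 r) * (1 - (2:ℝ)⁻¹)⁻¹ := by
          rw [tsum_mul_left, tsum_geometric_of_lt_one (by norm_num) (by norm_num)]
      _ = Real.sqrt (g0 r) * 2 := by norm_num
      _ ≤ 4 * Real.sqrt (g0 r) := by nlinarith [Real.sqrt_nonneg (g0 r)]
  -- continuity at 0⁺
  have hgbar_tz : Tendsto gbar (nhdsWithin 0 (Set.Ioi 0)) (nhds 0) := by
    have hev : g0 =ᶠ[nhdsWithin 0 (Set.Ioi 0)] g := by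
      filter_upwards [Ioo_mem_nhdsGT hε₀] with r hr
      exact hg0eq r ⟨hr.1.le, hr.2.le⟩
    have h1 : Tendsto g0 (nhdsWithin 0 (Set.Ioi 0)) (nhds 0) :=
      hg.tendsto_zero.congr' hev.symm
    have h2 : Tendsto (fun r => Real.sqrt (g0 r)) (nhdsWithin 0 (Set.Ioi 0)) (nhds 0) := by
      have := (Real.continuous_sqrt.tendsto 0).comp h1
      simpa [Function.comp_def] using this
    have hub : Tendsto (fun r => 4 * Real.sqrt (g0 r)) (nhdsWithin 0 (Set.Ioi 0)) (nhds 0) := by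
      have := h2.const_mul (4:ℝ)
      simpa using this
    apply tendsto_of_tendsto_of_tendsto_of_le_of_le' tendsto_const_nhds hub
    · exact Eventually.of_forall hgbar_nonneg
    · exact Eventually.of_forall hsqrt_bound
  -- ratio gbar r / r antitone
  have hgbar_ratio_anti : AntitoneOn (fun r => gbar r / r) (Set.Ioc 0 ε₀) := by
    intro r hr s hs hrs
    show gbar s / s ≤ gbar r / r
    rw [hgbardef, ← tsum_div_const, ← tsum_div_const]
    refine Summable.tsum_le_tsum (fun k => ?_) ((hsummk s).div_const s) ((hsummk r).div_const r)
    rw [mul_div_assoc, mul_div_assoc]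
    refine mul_le_mul_of_nonneg_left ?_ (by positivity)
    rw [hg0eq s ⟨hs.1.le, hs.2⟩, hg0eq r ⟨hr.1.le, hr.2⟩,
      ← min_div_div_right hs.1.le, ← min_div_div_right hr.1.le]
    refine le_min ((min_le_left _ _).trans (hganti hr hs hrs)) ((min_le_right _ _).trans ?_)
    exact div_le_div_of_nonneg_left (hcpos k).le hr.1 hrs
  -- ratio gbar r / r positive
  have hgbar_ratio_pos : ∀ r ∈ Set.Ioc 0 ε₀, 0 < gbar r / r := by
    intro r hr
    refine div_pos ?_ hr.1
    have h0 : 0 < (2:ℝ)^(0:ℕ) * min (g0 r) (c 0) := by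
      rw [pow_zero, one_mul]
      refine lt_min ?_ (hcpos 0)
      rw [hg0eq r ⟨hr.1.le, hr.2⟩]
      exact hgpos r hr
    exact Summable.tsum_pos (hsummk r) (hterm_nonneg r) 0 h0
  -- ratio gbar / g antitone
  have hratio_anti : AntitoneOn (fun r => gbar r / g r) (Set.Ioc 0 ε₀) := by
    intro r hr s hs hrs
    have hgr : 0 < g r := hgpos r hr
    have hgs : 0 < g s := hgpos s hs
    have hgrs : g r ≤ g s := hgmono ⟨hr.1.le, hr.2⟩ ⟨hs.1.le, hs.2⟩ hrs
    show gbar s / g s ≤ gbar r / g r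
    rw [hgbardef, ← tsum_div_const, ← tsum_div_const]
    refine Summable.tsum_le_tsum (fun k => ?_) ((hsummk s).div_const _) ((hsummk r).div_const _)
    rw [mul_div_assoc, mul_div_assoc]
    refine mul_le_mul_of_nonneg_left ?_ (by positivity)
    rw [hg0eq s ⟨hs.1.le, hs.2⟩, hg0eq r ⟨hr.1.le, hr.2⟩,
      ← min_div_div_right hgs.le, ← min_div_div_right hgr.le]
    refine le_min ?_ ((min_le_right _ _).trans (div_le_div_of_nonneg_left (hcpos k).le hgr hgrs))
    calc min (g s / g s) (c k / g s) ≤ g s / g s := min_le_left _ _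
      _ = 1 := div_self hgs.ne'
      _ = g r / g r := (div_self hgr.ne').symm
  -- ratio gbar / g tends to ∞
  have hratio_top : Tendsto (fun r => gbar r / g r) (nhdsWithin 0 (Set.Ioi 0)) atTop := by
    rw [tendsto_atTop]
    intro b
    obtain ⟨K, hK⟩ := exists_nat_ge b
    set δ : ℝ := (Finset.range (K + 1)).inf' Finset.nonempty_range_add_one c with hδdef
    have hδpos : 0 < δ := by
      rw [hδdef, Finset.lt_inf'_iff]
      exact fun i _ => hcpos i
    filter_upwards [Ioo_mem_nhdsGT hε₀,
      hg.tendsto_zero.eventually (gt_mem_nhds hδpos)] with r hr2 hr3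
    have hrIoc : r ∈ Set.Ioc 0 ε₀ := ⟨hr2.1, hr2.2.le⟩
    have hgr : 0 < g r := hgpos r hrIoc
    have hsum_lb : (K + 1 : ℝ) * g r ≤ gbar r := by
      calc (K + 1 : ℝ) * g r = ∑ _k ∈ Finset.range (K + 1), g r := by
            rw [Finset.sum_const, Finset.card_range]; push_cast; ring
        _ ≤ ∑ k ∈ Finset.range (K + 1), (2:ℝ)^k * min (g0 r) (c k) := by
            refine Finset.sum_le_sum fun k hk => ?_
            have h1 : g r ≤ c k := le_trans hr3.le (Finset.inf'_le c hk)
            rw [hg0eq r ⟨hrIoc.1.le, hrIoc.2⟩, min_eq_left h1]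
            calc g r = 1 * g r := (one_mul _).symm
              _ ≤ (2:ℝ)^k * g r :=
                mul_le_mul_of_nonneg_right (one_le_pow₀ (by norm_num)) hgr.le
        _ ≤ gbar r := Summable.sum_le_tsum _ (fun k _ => hterm_nonneg r k) (hsummk r)
    rw [le_div_iff₀ hgr]
    calc b * g r ≤ (K + 1 : ℝ) * g r := by
          refine mul_le_mul_of_nonneg_right ?_ hgr.le
          linarith
      _ ≤ gbar r := hsum_lb
  -- summability of gbar ∘ ℓ
  have hsum_gbar : Summable fun n => gbar (ℓ n) := by
    have hs1 : ∀ k : ℕ, Summable fun n => (2:ℝ)^k * min (g0 (ℓ n)) (c k) := fun k =>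
      ((hsum0.of_nonneg_of_le (fun n => le_min (hg0nonneg _) (hcpos k).le)
        (fun n => min_le_left _ _)).mul_left _)
    have hs2 : Summable fun k : ℕ => ∑' n, (2:ℝ)^k * min (g0 (ℓ n)) (c k) := by
      refine Summable.of_nonneg_of_le
        (fun k => tsum_nonneg fun n => hterm_nonneg _ _) (fun k => ?_)
        (summable_geometric_of_lt_one (by norm_num) (by norm_num : (2:ℝ)⁻¹ < 1))
      calc (∑' n, (2:ℝ)^k * min (g0 (ℓ n)) (c k))
          = (2:ℝ)^k * ∑' n, min (g0 (ℓ n)) (c k) := tsum_mul_left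
        _ ≤ (2:ℝ)^k * (4:ℝ)⁻¹ ^ k := mul_le_mul_of_nonneg_left (hcsum k) (by positivity)
        _ = ((2:ℝ) * (4:ℝ)⁻¹) ^ k := (mul_pow _ _ _).symm
        _ = (2:ℝ)⁻¹ ^ k := by norm_num
    have hsf : Summable (fun p : ℕ × ℕ => (2:ℝ)^p.1 * min (g0 (ℓ p.2)) (c p.1)) :=
      (summable_prod_of_nonneg (fun p => hterm_nonneg _ _)).2 ⟨hs1, hs2⟩
    have h2 := ((summable_prod_of_nonneg (f := fun p : ℕ × ℕ =>
        (2:ℝ)^p.2 * min (g0 (ℓ p.1)) (c p.2))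
        (fun p => hterm_nonneg _ _)).1 hsf.prod_symm).2
    exact h2
  exact ⟨gbar, ⟨hgbar0, hgbar_tz, ⟨ε₀, hε₀, hgbarmono.monotoneOn _⟩,
    ⟨ε₀, hε₀, hgbar_ratio_anti⟩, ⟨ε₀, hε₀, hgbar_ratio_pos⟩⟩,
    ⟨ε₀, hε₀, hratio_anti⟩, hratio_top, hsum_gbar⟩
end
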